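/- Let K be a field, d_1,…,d_n natural numbers, and for each i let f_i = Σ_{|a| ≤ d_i} c_{ia} x^a ∈ K[x_1,…,x_n]. For t ∈ K define f_{t,i} := Σ_{|a| ≤ d_i} c_{ia} t^{d_i − |a|} x^a, and let J_f = det(∂f_i/∂x_j) and J_{f_t} = det(∂f_{t,i}/∂x_j) be the Jacobian determinants. Then for every x ∈ K^n and every t ∈ K, J_{f_t}(t·x) = t^ρ·J_f(x), where ρ = Σ_{i=1}^n d_i − n (assuming Σ d_i ≥ n). -/

import Mathlib

open MvPolynomial

/-- The `t`-scaled polynomial of level `d` of `f = Σ_a c_a x^a`, namely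
`f_t := Σ_a c_a t^{d − |a|} x^a`, where `|a|` is the sum of the entries of `a`. -/
noncomputable def scaledPoly {K : Type*} [CommRing K] {n : ℕ}
    (f : MvPolynomial (Fin n) K) (d : ℕ) (t : K) : MvPolynomial (Fin n) K :=
  ∑ a ∈ f.support, monomial a (f.coeff a * t ^ (d - a.degree))

private lemma degree_sub_single {n : ℕ} (a : Fin n →₀ ℕ) (j : Fin n) (h : a j ≠ 0) :
    a.degree = (a - Finsupp.single j 1).degree + 1 := by
  have hle : Finsupp.single j 1 ≤ a := by
    rw [Finsupp.single_le_iff]; omega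
  have h2 := tsub_add_cancel_of_le hle
  have hw : ∀ b : Fin n →₀ ℕ, b.degree = Finsupp.weight 1 b :=
    fun b => DFunLike.congr_fun Finsupp.degree_eq_weight_one b
  have key : ∀ b : Fin n →₀ ℕ, (b + Finsupp.single j 1).degree = b.degree + 1 := by
    intro b
    rw [hw, hw, map_add]
    congr 1
    rw [Finsupp.weight_apply, Finsupp.sum_single_index] <;> simp
  conv_lhs => rw [← h2]
  exact key _

private lemma eval_smul_monomial {K : Type*} [CommRing K] {n : ℕ} (s : Fin n →₀ ℕ) (c t : K)
    (x : Fin n → K) :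
    eval (t • x) (monomial s c : MvPolynomial (Fin n) K)
      = c * t ^ s.degree * eval x (monomial s 1) := by
  simp only [eval_monomial, Finsupp.prod, Pi.smul_apply, smul_eq_mul, mul_pow,
    Finset.prod_mul_distrib, Finset.prod_pow_eq_pow_sum, Finsupp.degree, one_mul]
  exact (mul_assoc _ _ _).symm

private lemma eval_pderiv_scaledPoly {K : Type*} [CommRing K] {n : ℕ}
    (f : MvPolynomial (Fin n) K) (d : ℕ) (hd : f.totalDegree ≤ d) (j : Fin n)
    (t : K) (x : Fin n → K) :
    eval (t • x) (pderiv j (scaledPoly f d t)) = t ^ (d - 1) * eval x (pderiv j f) := by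
  conv_rhs => rw [f.as_sum]
  rw [scaledPoly, map_sum, map_sum, map_sum, map_sum, Finset.mul_sum]
  refine Finset.sum_congr rfl fun a ha => ?_
  rw [pderiv_monomial, pderiv_monomial, eval_smul_monomial, eval_monomial]
  by_cases h : a j = 0
  · simp [h]
  · have hdeg : a.degree = (a - Finsupp.single j 1).degree + 1 := degree_sub_single a j h
    have hda : a.degree ≤ d := by
      have := le_totalDegree ha
      exact le_trans (by rw [Finsupp.degree]; rfl) (le_trans this hd)
    rw [eval_monomial]
    have hexp : d - a.degree + (a - Finsupp.single j 1).degree = d - 1 := by omega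
    rw [← hexp, pow_add]
    ring

/-- If each `f_i` has total degree at most `d_i` and `Σ d_i ≥ n`, then the Jacobian
determinants of the system `f` and of the scaled system `f_t` satisfy
`J_{f_t}(t·x) = t^ρ·J_f(x)` for all `x ∈ K^n` and `t ∈ K`, where `ρ = Σ d_i − n`. -/
theorem jacobian_scaledPoly_eval_smul {K : Type*} [Field K] {n : ℕ}
    (f : Fin n → MvPolynomial (Fin n) K) (d : Fin n → ℕ)
    (hd : ∀ i, (f i).totalDegree ≤ d i) (hn : n ≤ ∑ i, d i) :
    ∀ (x : Fin n → K) (t : K),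
      eval (t • x) (Matrix.of fun i j => pderiv j (scaledPoly (f i) (d i) t)).det =
        t ^ ((∑ i, d i) - n) * eval x (Matrix.of fun i j => pderiv j (f i)).det := by
  intro x t
  have hdet : ∀ (y : Fin n → K) (M : Matrix (Fin n) (Fin n) (MvPolynomial (Fin n) K)),
      eval y M.det = (M.map (eval y)).det := fun y M => RingHom.map_det (eval y) M
  rw [hdet, hdet]
  have hrow : ((Matrix.of fun i j => pderiv j (scaledPoly (f i) (d i) t)).map
      (eval (t • x)))
      = Matrix.of fun i j => t ^ (d i - 1) *
        (((Matrix.of fun i j => pderiv j (f i)).map (eval x)) i j) := by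
    ext i j
    exact eval_pderiv_scaledPoly (f i) (d i) (hd i) j t x
  rw [hrow, Matrix.det_mul_column]
  by_cases hpos : ∀ i, 1 ≤ d i
  · congr 1
    rw [Finset.prod_pow_eq_pow_sum]
    congr 1
    have : ∑ i, (d i - 1) + ∑ i : Fin n, 1 = ∑ i, d i := by
      rw [← Finset.sum_add_distrib]
      exact Finset.sum_congr rfl fun i _ => by have := hpos i; omega
    simp only [Finset.sum_const, Finset.card_univ, Fintype.card_fin, smul_eq_mul, mul_one] at this
    omega
  · push_neg at hpos
    obtain ⟨i, hi⟩ := hpos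
    have hdi : d i = 0 := by omega
    have hconst : (f i).totalDegree = 0 := by have := hd i; omega
    have hzero : ∀ j, pderiv j (f i) = 0 := by
      intro j
      conv_lhs => rw [(f i).as_sum]
      rw [map_sum]
      refine Finset.sum_eq_zero fun a ha => ?_
      rw [pderiv_monomial]
      have := (totalDegree_eq_zero_iff _ (f i)).mp hconst a ha j
      simp [this]
    have : ((Matrix.of fun i j => pderiv j (f i)).map (eval x)).det = 0 := by
      apply Matrix.det_eq_zero_of_row_eq_zero i
      intro j
      simp [hzero j]
    rw [this]
    ring
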